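/- arXiv:1908.09248 — 4 statements merged into one kernel-verified Lean document; each statement's English description precedes it below -/
import Mathlib

section
/- Let n ∈ ℕ, d = (d₁,…,d_n) ∈ ℕ^n and γ = (γ₁,…,γ_n) ∈ ℂ^n with Re γ_j > 0 for all j. For every s = (s₁,…,s_n) ∈ ℂ^n such that Re(s_j + s_{j+1} + ⋯ + s_n) > 1/d_j + 1/d_{j+1} + ⋯ + 1/d_n for all j = 1,…,n, the family m ↦ ∏_{j=1}^n L_j(m)^{−s_j}, indexed by m ∈ (ℕ_{≥1})^n, is absolutely summable; in particular the multiple series ζ_{n,d,γ}(s) converges absolutely at every such point s. -/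
open Finset

lemma aux_filter_range (n k : ℕ) :
    (Finset.range n).filter (fun j => k ≤ j) = Finset.Ico k n := by
  ext j; simp [Finset.mem_Ico]; omega

lemma aux_sum_Ici {n : ℕ} (f : Fin n → ℝ) (k : ℕ) (hk : k < n) :
    ∑ j ∈ Finset.Ico k n, (if h : j < n then f ⟨j, h⟩ else 0)
      = ∑ j ∈ Finset.Ici (⟨k, hk⟩ : Fin n), f j := by
  rw [← aux_filter_range, Finset.sum_filter,
    ← Fin.sum_univ_eq_sum_range (fun j => if k ≤ j then (if h : j < n then f ⟨j, h⟩ else 0) else 0) n]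
  have h1 : Finset.Ici (⟨k, hk⟩ : Fin n) = Finset.univ.filter (fun j : Fin n => k ≤ j.val) := by
    ext j; simp [Fin.le_def]
  rw [h1, Finset.sum_filter]
  refine Finset.sum_congr rfl fun j _ => ?_
  by_cases h : k ≤ j.val <;> simp [h, j.isLt]

lemma key_prod (R v : ℕ → ℝ) (hmono : Monotone R) (hpos : ∀ j, 0 < R j) (n : ℕ)
    (hv : ∀ k, k < n → (∑ j ∈ Finset.Ico k n, v j) ≤ 0) :
    ∀ i k, n - k = i → k ≤ n →
      ∏ j ∈ Finset.Ico k n, R j ^ v j ≤ R k ^ (∑ j ∈ Finset.Ico k n, v j) := by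
  intro i
  induction i with
  | zero =>
    intro k h1 h2
    have : k = n := by omega
    subst this
    simp
  | succ i ih =>
    intro k h1 h2
    have hkn : k < n := by omega
    rw [Finset.prod_eq_prod_Ico_succ_bot hkn, Finset.sum_eq_sum_Ico_succ_bot hkn]
    have hS : (∑ j ∈ Finset.Ico (k+1) n, v j) ≤ 0 := by
      rcases eq_or_lt_of_le (show k + 1 ≤ n by omega) with h | h
      · rw [h, Finset.Ico_self]; simp
      · exact hv _ h
    have t1 := ih (k+1) (by omega) (by omega)
    have t2 : R (k+1) ^ (∑ j ∈ Finset.Ico (k+1) n, v j)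
        ≤ R k ^ (∑ j ∈ Finset.Ico (k+1) n, v j) :=
      Real.rpow_le_rpow_of_nonpos (hpos k) (hmono (Nat.le_succ k)) hS
    have t3 := mul_le_mul_of_nonneg_left (t1.trans t2)
      (le_of_lt (Real.rpow_pos_of_pos (hpos k) (v k)))
    rwa [← Real.rpow_add (hpos k)] at t3

lemma summable_pi_prod : ∀ {n : ℕ} (f : Fin n → ℕ → ℝ), (∀ j k, 0 ≤ f j k) →
    (∀ j, Summable (f j)) → Summable (fun m : Fin n → ℕ => ∏ j, f j (m j)) := by
  intro n
  induction n with
  | zero => intro f _ _; simp; exact .of_finite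
  | succ n ih =>
    intro f h0 hf
    have h := (hf 0).mul_of_nonneg (ih (fun j => f j.succ) (fun j k => h0 _ _)
      (fun j => hf _)) (fun k => h0 0 k)
      (fun m => Finset.prod_nonneg fun j _ => h0 _ _)
    have : (fun m : Fin (n+1) → ℕ => ∏ j, f j (m j)) =
        (fun p : ℕ × (Fin n → ℕ) => f 0 p.1 * ∏ j, f j.succ (p.2 j)) ∘
          ((Fin.consEquiv (fun _ => ℕ)).symm) := by
      funext m
      simp [Fin.consEquiv, Fin.prod_univ_succ, Fin.tail]
    rw [this]
    exact h.comp_injective (Fin.consEquiv (fun _ => ℕ)).symm.injective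


/-- `L_j(m) = γ₁ m₁^{d₁} + ⋯ + γ_j m_j^{d_j}`. -/
noncomputable def Lfun {n : ℕ} (d : Fin n → ℕ) (γ : Fin n → ℂ) (m : Fin n → ℕ) (j : Fin n) : ℂ :=
  ∑ i ∈ Finset.Iic j, γ i * ((m i : ℂ)) ^ (d i)

set_option maxHeartbeats 1000000 in
/-- In the domain `Re(s_j+⋯+s_n) > 1/d_j + ⋯ + 1/d_n` (for all `j`), the family
`m ↦ ∏_j L_j(m)^{-s_j}`, indexed by `m ∈ (ℕ_{≥1})^n`, is absolutely summable. -/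
theorem stmt0 (n : ℕ) (hn : 0 < n) (d : Fin n → ℕ) (hd : ∀ j, 0 < d j)
    (γ : Fin n → ℂ) (hγ : ∀ j, 0 < (γ j).re) (s : Fin n → ℂ)
    (hs : ∀ j : Fin n, (∑ i ∈ Finset.Ici j, 1 / (d i : ℝ)) < ∑ i ∈ Finset.Ici j, (s i).re) :
    Summable (fun m : Fin n → ℕ => ‖∏ j, (Lfun d γ (fun i => m i + 1) j) ^ (-(s j))‖) := by
  have hne : Nonempty (Fin n) := ⟨⟨0, hn⟩⟩
  set σ : Fin n → ℝ := fun j => (s j).re with hσ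
  -- ε
  obtain ⟨j0, -, hj0⟩ := Finset.exists_min_image Finset.univ
    (fun j : Fin n => (∑ i ∈ Finset.Ici j, σ i) - ∑ i ∈ Finset.Ici j, 1 / (d i : ℝ))
    Finset.univ_nonempty
  set ε : ℝ := ((∑ i ∈ Finset.Ici j0, σ i) - ∑ i ∈ Finset.Ici j0, 1 / (d i : ℝ)) / n with hε
  have hεpos : 0 < ε := div_pos (by linarith [hs j0]) (by exact_mod_cast hn)
  set u : Fin n → ℝ := fun j => 1 / (d j : ℝ) + ε with hu
  set v : Fin n → ℝ := fun j => u j - σ j with hv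
  have hvtail : ∀ j : Fin n, (∑ i ∈ Finset.Ici j, v i) ≤ 0 := by
    intro j
    have h1 : (∑ i ∈ Finset.Ici j, v i)
        = (∑ i ∈ Finset.Ici j, 1 / (d i : ℝ)) + (Finset.Ici j).card • ε
          - ∑ i ∈ Finset.Ici j, σ i := by
      simp [hv, hu, Finset.sum_sub_distrib, Finset.sum_add_distrib]
    have h2 : ((Finset.Ici j).card : ℝ) * ε ≤ n * ε := by
      have : (Finset.Ici j).card ≤ n := by
        simpa using Finset.card_le_card (Finset.subset_univ (Finset.Ici j))
      exact mul_le_mul_of_nonneg_right (by exact_mod_cast this) hεpos.le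
    have h3 : (n : ℝ) * ε = (∑ i ∈ Finset.Ici j0, σ i) - ∑ i ∈ Finset.Ici j0, 1 / (d i : ℝ) := by
      rw [hε]; field_simp
    have h4 := hj0 j (Finset.mem_univ j)
    rw [h1, nsmul_eq_mul]
    linarith
  -- constants c, K
  obtain ⟨i0, -, hi0⟩ := Finset.exists_min_image Finset.univ (fun i => (γ i).re)
    Finset.univ_nonempty
  set c : ℝ := (γ i0).re with hc
  have hcpos : 0 < c := hγ i0
  have hcle : ∀ i, c ≤ (γ i).re := fun i => hi0 i (Finset.mem_univ i)
  set K : ℝ := 1 + ∑ i, ‖γ i‖ / (γ i).re with hK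
  have hK1 : 1 ≤ K := by
    rw [hK]
    have : 0 ≤ ∑ i, ‖γ i‖ / (γ i).re :=
      Finset.sum_nonneg fun i _ => div_nonneg (norm_nonneg _) (hγ i).le
    linarith
  have hKabs : ∀ i, ‖γ i‖ ≤ K * (γ i).re := by
    intro i
    have h1 : ‖γ i‖ / (γ i).re ≤ K := by
      rw [hK]
      have := Finset.single_le_sum
        (f := fun i => ‖γ i‖ / (γ i).re)
        (fun i _ => div_nonneg (norm_nonneg _) (hγ i).le) (Finset.mem_univ i)
      linarith
    calc ‖γ i‖ = (‖γ i‖ / (γ i).re) * (γ i).re :=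
          (div_mul_cancel₀ _ (hγ i).ne').symm
      _ ≤ K * (γ i).re := mul_le_mul_of_nonneg_right h1 (hγ i).le
  -- the comparison series
  set C : ℝ := (∏ j, Real.exp (Real.pi * |(s j).im|) * K ^ |σ j|) *
      (c ^ (∑ j, v j) * ∏ j, c ^ (-(u j))) with hC
  have hsum : Summable (fun m : Fin n → ℕ =>
      C * ∏ j, ((m j : ℝ) + 1) ^ (-(1 + ε * d j))) := by
    refine Summable.mul_left C (summable_pi_prod (fun j k => ((k : ℝ) + 1) ^ (-(1 + ε * d j))) ?_ ?_)
    · intro j k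
      positivity
    · intro j
      have h1 : (-(1 + ε * d j) : ℝ) < -1 := by
        have : (0:ℝ) < ε * d j := mul_pos hεpos (by exact_mod_cast hd j)
        linarith
      have h2 : Summable (fun k : ℕ => (k : ℝ) ^ (-(1 + ε * d j))) :=
        Real.summable_nat_rpow.mpr h1
      have h3 := (summable_nat_add_iff 1).mpr h2
      refine h3.congr fun k => ?_
      push_cast
      ring_nf
  refine Summable.of_nonneg_of_le (fun m => norm_nonneg _) ?_ hsum
  intro m
  -- pointwise bound
  set N : Fin n → ℝ := fun i => (m i : ℝ) + 1 with hNdef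
  set a : Fin n → ℝ := fun i => N i ^ d i with hadef
  have hN1 : ∀ i, 1 ≤ N i := fun i => by simp [hNdef]
  have ha1 : ∀ i, 1 ≤ a i := fun i => one_le_pow₀ (hN1 i)
  have ha0 : ∀ i, 0 < a i := fun i => lt_of_lt_of_le one_pos (ha1 i)
  set R : Fin n → ℝ := fun j => ∑ i ∈ Finset.Iic j, (γ i).re * a i with hRdef
  have hLre : ∀ j, (Lfun d γ (fun i => m i + 1) j).re = R j := by
    intro j
    simp only [Lfun, Complex.re_sum, hRdef]
    refine Finset.sum_congr rfl fun i _ => ?_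
    have h1 : ((m i + 1 : ℕ) : ℂ) ^ (d i) = ((a i : ℝ) : ℂ) := by
      simp only [hadef, hNdef]
      push_cast
      ring
    rw [h1, Complex.mul_re]
    simp
  have haR : ∀ j, c * a j ≤ R j := by
    intro j
    calc c * a j ≤ (γ j).re * a j := mul_le_mul_of_nonneg_right (hcle j) (ha0 j).le
      _ ≤ R j := Finset.single_le_sum
          (f := fun i => (γ i).re * a i)
          (fun i _ => mul_nonneg (hγ i).le (ha0 i).le) (Finset.mem_Iic.mpr le_rfl)
  have hRpos : ∀ j, 0 < R j := fun j =>
    lt_of_lt_of_le (mul_pos hcpos (ha0 j)) (haR j)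
  have hRc : ∀ j, c ≤ R j := fun j =>
    le_trans (le_mul_of_one_le_right hcpos.le (ha1 j)) (haR j)
  have hRmono : ∀ j j' : Fin n, j ≤ j' → R j ≤ R j' := by
    intro j j' h
    exact Finset.sum_le_sum_of_subset_of_nonneg (Finset.Iic_subset_Iic.mpr h)
      (fun i _ _ => mul_nonneg (hγ i).le (ha0 i).le)
  have habs_lo : ∀ j, R j ≤ ‖Lfun d γ (fun i => m i + 1) j‖ := fun j =>
    (hLre j) ▸ Complex.re_le_norm _
  have habs_hi : ∀ j, ‖Lfun d γ (fun i => m i + 1) j‖ ≤ K * R j := by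
    intro j
    calc ‖Lfun d γ (fun i => m i + 1) j‖
        ≤ ∑ i ∈ Finset.Iic j, ‖γ i * ((m i + 1 : ℕ) : ℂ) ^ (d i)‖ :=
          norm_sum_le _ _
      _ = ∑ i ∈ Finset.Iic j, ‖γ i‖ * a i := by
          refine Finset.sum_congr rfl fun i _ => ?_
          have h1 : ((m i + 1 : ℕ) : ℂ) ^ (d i) = ((a i : ℝ) : ℂ) := by
            simp only [hadef, hNdef]; push_cast; ring
          rw [norm_mul, h1, Complex.norm_real, Real.norm_eq_abs, abs_of_pos (ha0 i)]
      _ ≤ ∑ i ∈ Finset.Iic j, K * ((γ i).re * a i) := by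
          refine Finset.sum_le_sum fun i _ => ?_
          rw [← mul_assoc]
          exact mul_le_mul_of_nonneg_right (hKabs i) (ha0 i).le
      _ = K * R j := by rw [hRdef, Finset.mul_sum]
  have hfac : ∀ j, ‖(Lfun d γ (fun i => m i + 1) j) ^ (-(s j))‖ ≤
      (Real.exp (Real.pi * |(s j).im|) * K ^ |σ j|) * R j ^ (-σ j) := by
    intro j
    set L : ℂ := Lfun d γ (fun i => m i + 1) j with hLdef
    have hLabs0 : 0 ≤ ‖L‖ := norm_nonneg _
    have h1 : ‖L ^ (-(s j))‖ ≤
        ‖L‖ ^ (-σ j) / Real.exp (Complex.arg L * (-(s j)).im) := by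
      simpa [hσ] using Complex.norm_cpow_le L (-(s j))
    have h2 : ‖L‖ ^ (-σ j) ≤ K ^ |σ j| * R j ^ (-σ j) := by
      rcases le_or_gt 0 (σ j) with h | h
      · have t1 : ‖L‖ ^ (-σ j) ≤ R j ^ (-σ j) :=
          Real.rpow_le_rpow_of_nonpos (hRpos j) (habs_lo j) (neg_nonpos.mpr h)
        have t2 : (1:ℝ) ≤ K ^ |σ j| := Real.one_le_rpow hK1 (abs_nonneg _)
        nlinarith [Real.rpow_nonneg (hRpos j).le (-σ j)]
      · have t1 : ‖L‖ ^ (-σ j) ≤ (K * R j) ^ (-σ j) :=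
          Real.rpow_le_rpow hLabs0 (habs_hi j) (by linarith)
        have t2 : (K * R j) ^ (-σ j) = K ^ (-σ j) * R j ^ (-σ j) :=
          Real.mul_rpow (by linarith) (hRpos j).le
        rw [abs_of_neg h]
        rw [t2] at t1
        exact t1
    have h3 : 1 / Real.exp (Complex.arg L * (-(s j)).im) ≤
        Real.exp (Real.pi * |(s j).im|) := by
      rw [one_div, ← Real.exp_neg]
      apply Real.exp_le_exp.mpr
      have := Complex.abs_arg_le_pi L
      have h4 : |Complex.arg L * (-(s j)).im| ≤ Real.pi * |(s j).im| := by
        rw [abs_mul]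
        simp only [Complex.neg_im, abs_neg]
        exact mul_le_mul_of_nonneg_right (Complex.abs_arg_le_pi L) (abs_nonneg _)
      have := neg_abs_le (Complex.arg L * (-(s j)).im)
      linarith
    have h5 : ‖L‖ ^ (-σ j) / Real.exp (Complex.arg L * (-(s j)).im)
        = ‖L‖ ^ (-σ j) * (1 / Real.exp (Complex.arg L * (-(s j)).im)) := by
      ring
    calc ‖L ^ (-(s j))‖ = ‖L ^ (-(s j))‖ := rfl
      _ ≤ ‖L‖ ^ (-σ j) / Real.exp (Complex.arg L * (-(s j)).im) := h1
      _ = ‖L‖ ^ (-σ j) * (1 / Real.exp (Complex.arg L * (-(s j)).im)) := h5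
      _ ≤ (K ^ |σ j| * R j ^ (-σ j)) * Real.exp (Real.pi * |(s j).im|) := by
          exact mul_le_mul h2 h3
            (le_of_lt (div_pos one_pos (Real.exp_pos _)))
            (mul_nonneg (Real.rpow_nonneg (by linarith) _)
              (Real.rpow_nonneg (hRpos j).le _))
      _ = (Real.exp (Real.pi * |(s j).im|) * K ^ |σ j|) * R j ^ (-σ j) := by
          rw [mul_comm, ← mul_assoc]
  -- key monotone product estimate
  have hupos : ∀ j, 0 < u j := by
    intro j
    have : (0:ℝ) < 1 / (d j : ℝ) := by
      have : (0:ℝ) < (d j : ℝ) := by exact_mod_cast hd j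
      positivity
    simp only [hu]
    linarith
  have hkey : ∏ j, R j ^ v j ≤ c ^ (∑ j, v j) := by
    set Rn : ℕ → ℝ := fun k => if h : k < n then R ⟨k, h⟩ else R ⟨n - 1, by omega⟩ with hRn
    set vn : ℕ → ℝ := fun k => if h : k < n then v ⟨k, h⟩ else 0 with hvn
    have hmono : Monotone Rn := by
      intro x y hxy
      by_cases hx : x < n
      · by_cases hy : y < n
        · simp only [hRn, dif_pos hx, dif_pos hy]
          exact hRmono _ _ (by simpa [Fin.mk_le_mk] using hxy)
        · simp only [hRn, dif_pos hx, dif_neg hy]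
          exact hRmono _ _ (by simp [Fin.mk_le_mk]; omega)
      · have hy : ¬ y < n := by omega
        simp only [hRn, dif_neg hx, dif_neg hy]
        exact le_rfl
    have hposn : ∀ k, 0 < Rn k := by
      intro k
      by_cases h : k < n <;> simp only [hRn, dif_pos, dif_neg, h] <;>
        first | exact hRpos _ | (simp only [dif_neg h]; exact hRpos _)
    have htail : ∀ k, k < n → ∑ j ∈ Finset.Ico k n, vn j ≤ 0 := by
      intro k hk
      have heq : ∑ j ∈ Finset.Ico k n, vn j = ∑ j ∈ Finset.Ici (⟨k, hk⟩ : Fin n), v j := by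
        rw [← aux_sum_Ici v k hk]
      rw [heq]
      exact hvtail _
    have h0 := key_prod Rn vn hmono hposn n htail n 0 (by omega) (by omega)
    have hLprod : ∏ j ∈ Finset.Ico 0 n, Rn j ^ vn j = ∏ j, R j ^ v j := by
      rw [← Finset.range_eq_Ico, ← Fin.prod_univ_eq_prod_range (fun k => Rn k ^ vn k) n]
      exact Finset.prod_congr rfl fun j _ => by simp [hRn, hvn, j.isLt]
    have hSsum : ∑ j ∈ Finset.Ico 0 n, vn j = ∑ j, v j := by
      rw [← Finset.range_eq_Ico, ← Fin.sum_univ_eq_sum_range (fun k => vn k) n]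
      exact Finset.sum_congr rfl fun j _ => by simp [hvn, j.isLt]
    rw [hLprod, hSsum] at h0
    have hS0 : ∑ j, v j ≤ 0 := by
      have := htail 0 hn
      rwa [hSsum] at this
    refine h0.trans (Real.rpow_le_rpow_of_nonpos hcpos ?_ hS0)
    have : Rn 0 = R ⟨0, hn⟩ := by simp [hRn, hn]
    rw [this]
    exact hRc _
  have hstep : ∀ j, R j ^ (-(u j)) ≤ c ^ (-(u j)) * N j ^ (-(1 + ε * d j)) := by
    intro j
    have hca : 0 < c * a j := mul_pos hcpos (ha0 j)
    have t1 : R j ^ (-(u j)) ≤ (c * a j) ^ (-(u j)) :=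
      Real.rpow_le_rpow_of_nonpos hca (haR j) (neg_nonpos.mpr (hupos j).le)
    have t2 : (c * a j) ^ (-(u j)) = c ^ (-(u j)) * a j ^ (-(u j)) :=
      Real.mul_rpow hcpos.le (ha0 j).le
    have hN0 : (0:ℝ) ≤ N j := le_trans zero_le_one (hN1 j)
    have t3 : a j ^ (-(u j)) = N j ^ (-(1 + ε * d j)) := by
      have hdj : (d j : ℝ) ≠ 0 := by
        have := hd j; positivity
      simp only [hadef]
      rw [← Real.rpow_natCast (N j) (d j), ← Real.rpow_mul hN0]
      congr 1
      simp only [hu]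
      field_simp
    rw [t2, t3] at t1
    exact t1
  -- assembly
  have hE0 : ∀ j, (0:ℝ) ≤ Real.exp (Real.pi * |(s j).im|) * K ^ |σ j| :=
    fun j => mul_nonneg (Real.exp_pos _).le (Real.rpow_nonneg (by linarith) _)
  calc ‖∏ j, (Lfun d γ (fun i => m i + 1) j) ^ (-(s j))‖
      = ∏ j, ‖(Lfun d γ (fun i => m i + 1) j) ^ (-(s j))‖ := norm_prod _ _
    _ ≤ ∏ j, (Real.exp (Real.pi * |(s j).im|) * K ^ |σ j|) * R j ^ (-σ j) :=
        Finset.prod_le_prod (fun j _ => norm_nonneg _) (fun j _ => hfac j)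
    _ = (∏ j, Real.exp (Real.pi * |(s j).im|) * K ^ |σ j|) * ∏ j, R j ^ (-σ j) :=
        Finset.prod_mul_distrib
    _ = (∏ j, Real.exp (Real.pi * |(s j).im|) * K ^ |σ j|) *
          ((∏ j, R j ^ v j) * ∏ j, R j ^ (-(u j))) := by
        have hvu : ∀ j : Fin n, v j + -(u j) = -σ j := fun j => by
          simp only [hv]; ring
        have hsplit : (∏ j, R j ^ (-σ j)) = (∏ j, R j ^ v j) * ∏ j, R j ^ (-(u j)) := by
          rw [← Finset.prod_mul_distrib]
          refine Finset.prod_congr rfl fun j _ => ?_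
          rw [← Real.rpow_add (hRpos j), hvu j]
        rw [hsplit]
    _ ≤ (∏ j, Real.exp (Real.pi * |(s j).im|) * K ^ |σ j|) *
          ((c ^ (∑ j, v j)) * ∏ j, (c ^ (-(u j)) * N j ^ (-(1 + ε * d j)))) := by
        refine mul_le_mul_of_nonneg_left ?_ (Finset.prod_nonneg fun j _ => hE0 j)
        refine mul_le_mul hkey
          (Finset.prod_le_prod (fun j _ => Real.rpow_nonneg (hRpos j).le _)
            (fun j _ => hstep j))
          (Finset.prod_nonneg fun j _ => Real.rpow_nonneg (hRpos j).le _)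
          (Real.rpow_nonneg hcpos.le _)
    _ = C * ∏ j, ((m j : ℝ) + 1) ^ (-(1 + ε * d j)) := by
        rw [hC, Finset.prod_mul_distrib]
        simp only [hNdef, Finset.prod_mul_distrib, mul_assoc]
end

section
/- Let d > 0 be a real number and let a, b, s ∈ ℂ with Re a > 0, Re b > 0 and Re s > 1/d. Then ∫₀^∞ (b + a·x^d)^{−s} dx = (1/(d · a^{1/d} · b^{s−1/d})) · Γ(s − 1/d) · Γ(1/d) / Γ(s), where Γ is the complex Gamma function. -/
open Complex

open Real Set MeasureTheory Filter Metric

set_option maxHeartbeats 1000000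

lemma normEq {z w : ℂ} {t : ℝ} (ht : 0 < t) :
    ‖(t : ℂ) ^ (z - 1) * Complex.exp (-(w * t))‖ =
      t ^ (z.re - 1) * Real.exp (-(w.re * t)) := by
  rw [norm_mul, Complex.norm_cpow_eq_rpow_re_of_pos ht, Complex.norm_exp]
  simp [Complex.sub_re]

lemma contOn (z w : ℂ) :
    ContinuousOn (fun t : ℝ => (t : ℂ) ^ (z - 1) * Complex.exp (-(w * t))) (Ioi 0) := by
  apply ContinuousOn.mul
  · apply continuousOn_of_forall_continuousAt
    intro x hx
    exact (continuousAt_cpow_const (Complex.ofReal_mem_slitPlane.2 hx)).comp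
      Complex.continuous_ofReal.continuousAt
  · exact (Complex.continuous_exp.comp
      ((continuous_const.mul Complex.continuous_ofReal).neg)).continuousOn

lemma intgOnR {c : ℝ} {e : ℝ} (hc : 0 < c) (he : -1 < e) :
    IntegrableOn (fun t : ℝ => t ^ e * Real.exp (-(c * t))) (Ioi 0) := by
  have := integrableOn_rpow_mul_exp_neg_mul_rpow (s := e) (p := 1) he one_pos hc
  refine this.congr_fun (fun t ht => ?_) measurableSet_Ioi
  simp only [Real.rpow_one, neg_mul]

lemma intgOn {z w : ℂ} (hz : 0 < z.re) (hw : 0 < w.re) :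
    IntegrableOn (fun t : ℝ => (t : ℂ) ^ (z - 1) * Complex.exp (-(w * t))) (Ioi 0) := by
  refine Integrable.mono' (intgOnR (e := z.re - 1) hw (by linarith))
    ((contOn z w).aestronglyMeasurable measurableSet_Ioi) ?_
  filter_upwards [ae_restrict_mem measurableSet_Ioi] with t ht
  rw [normEq ht]

/-- key lemma: complex-coefficient Gamma integral -/
lemma lem1 {z w : ℂ} (hz : 0 < z.re) (hw : 0 < w.re) :
    ∫ t in Ioi (0:ℝ), (t : ℂ) ^ (z - 1) * Complex.exp (-(w * t)) =
      Complex.Gamma z * w ^ (-z) := by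
  set U : Set ℂ := {w : ℂ | 0 < w.re} with hU
  have hUo : IsOpen U := isOpen_lt continuous_const Complex.continuous_re
  have hUp : IsPreconnected U := (convex_halfSpace_re_gt 0).isPreconnected
  set F : ℂ → ℂ := fun w => ∫ t in Ioi (0:ℝ), (t : ℂ) ^ (z - 1) * Complex.exp (-(w * t)) with hF
  set G : ℂ → ℂ := fun w => Complex.Gamma z * w ^ (-z) with hG
  have hFd : ∀ w ∈ U, DifferentiableAt ℂ F w := by
    intro w₀ hw₀
    simp only [hU, mem_setOf_eq] at hw₀
    set ε : ℝ := w₀.re / 2 with hε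
    have hεpos : 0 < ε := by positivity
    have key := hasDerivAt_integral_of_dominated_loc_of_deriv_le (μ := volume.restrict (Ioi 0))
      (F := fun w (t : ℝ) => (t : ℂ) ^ (z - 1) * Complex.exp (-(w * t)))
      (F' := fun w (t : ℝ) => (t : ℂ) ^ (z - 1) * (Complex.exp (-(w * t)) * (-t)))
      (x₀ := w₀) (bound := fun t : ℝ => t ^ z.re * Real.exp (-(ε * t))) (ball_mem_nhds w₀ hεpos)
      (Filter.Eventually.of_forall fun w =>
        ((contOn z w).aestronglyMeasurable measurableSet_Ioi))
      (intgOn hz (by simpa using hw₀)) ?_ ?_ ?_ ?_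
    · exact key.2.differentiableAt
    · -- measurability of F' w₀
      apply ContinuousOn.aestronglyMeasurable ?_ measurableSet_Ioi
      refine ContinuousOn.congr ((contOn z w₀).mul
        (Complex.continuous_ofReal.neg.continuousOn)) (fun t _ => by
          show (t:ℂ) ^ (z - 1) * (Complex.exp (-(w₀ * t)) * (-t)) =
            (t : ℂ) ^ (z - 1) * Complex.exp (-(w₀ * t)) * (-(t:ℂ)); ring)
    · -- bound
      filter_upwards [ae_restrict_mem measurableSet_Ioi] with t ht
      intro w hwball
      have ht' : (0:ℝ) < t := ht
      have hret : ε ≤ w.re := by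
        have h3 := (Complex.abs_re_le_norm (w - w₀)).trans_lt
          (by simpa [Complex.dist_eq] using mem_ball_iff_norm.1 hwball)
        have h4 := abs_lt.1 h3
        simp only [Complex.sub_re] at h4
        have := h4.1
        simp only [hε] at this ⊢
        linarith
      have hnorm : ‖(t : ℂ) ^ (z - 1) * (Complex.exp (-(w * t)) * (-(t:ℂ)))‖
          = t ^ (z.re - 1) * Real.exp (-(w.re * t)) * t := by
        rw [← mul_assoc, norm_mul, normEq ht']
        congr 1
        simp [abs_of_pos ht']
      rw [hnorm]
      have heq : t ^ (z.re - 1) * Real.exp (-(w.re * t)) * t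
          = t ^ z.re * Real.exp (-(w.re * t)) := by
        rw [show t ^ (z.re - 1) * Real.exp (-(w.re * t)) * t
            = t ^ (z.re - 1) * t * Real.exp (-(w.re * t)) by ring,
          ← Real.rpow_add_one ht'.ne', sub_add_cancel]
      rw [heq]
      have : Real.exp (-(w.re * t)) ≤ Real.exp (-(ε * t)) :=
        Real.exp_le_exp.2 (by nlinarith)
      exact mul_le_mul_of_nonneg_left this (Real.rpow_nonneg ht'.le _)
    · exact intgOnR hεpos (by linarith)
    · -- differentiability in w
      filter_upwards [ae_restrict_mem measurableSet_Ioi] with t ht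
      intro w hwball
      have h1 : HasDerivAt (fun w : ℂ => -(w * t)) (-t) w := (hasDerivAt_mul_const _).neg
      exact (h1.cexp).const_mul _
  have hGd : ∀ w ∈ U, DifferentiableAt ℂ G w := by
    intro w₀ hw₀
    apply DifferentiableAt.const_mul
    exact (differentiableAt_id.cpow (differentiableAt_const _)
      (Or.inl (by simpa [hU] using hw₀)))
  have hFa : AnalyticOnNhd ℂ F U :=
    DifferentiableOn.analyticOnNhd (fun w hw => (hFd w hw).differentiableWithinAt) hUo
  have hGa : AnalyticOnNhd ℂ G U :=
    DifferentiableOn.analyticOnNhd (fun w hw => (hGd w hw).differentiableWithinAt) hUo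
  have hreal : ∀ r : ℝ, 0 < r → F r = G r := by
    intro r hr
    have h := Complex.integral_cpow_mul_exp_neg_mul_Ioi hz hr
    simp only [hF, hG]
    rw [h, one_div, Complex.inv_cpow _ _
      (by rw [Complex.arg_ofReal_of_nonneg hr.le]; exact (Real.pi_ne_zero).symm),
      ← Complex.cpow_neg, mul_comm]
  have hfreq : ∃ᶠ w in nhdsWithin 1 {(1:ℂ)}ᶜ, F w = G w := by
    have hseq : Tendsto (fun n : ℕ => (1 + 1/(n+1) : ℝ)) atTop (nhds 1) := by
      simpa using (tendsto_one_div_add_atTop_nhds_zero_nat).const_add (1:ℝ)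
    have htend : Tendsto (fun n : ℕ => ((1 + 1/(n+1) : ℝ) : ℂ)) atTop
        (nhdsWithin 1 {(1:ℂ)}ᶜ) := by
      rw [tendsto_nhdsWithin_iff]
      refine ⟨?_, ?_⟩
      · have := (Complex.continuous_ofReal.tendsto 1).comp hseq
        simpa [Function.comp_def] using this
      · filter_upwards with n
        simp only [mem_compl_iff, mem_singleton_iff]
        intro h
        rw [show (1:ℂ) = ((1:ℝ):ℂ) by norm_num, Complex.ofReal_inj] at h
        have hpos : (0:ℝ) < 1/(n+1) := by positivity
        linarith [h]
    exact htend.frequently (Frequently.of_forall fun n => hreal _ (by positivity))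
  exact AnalyticOnNhd.eqOn_of_preconnected_of_frequently_eq hFa hGa hUp
    (by simp [hU] : (1:ℂ) ∈ U) hfreq hw

lemma mulCpow {a : ℂ} (ha : a ≠ 0) {t : ℝ} (ht : 0 < t) (w : ℂ) :
    (a * (t:ℂ)) ^ w = a ^ w * (t:ℂ) ^ w := by
  have htne : ((t:ℂ)) ≠ 0 := Complex.ofReal_ne_zero.2 ht.ne'
  rw [cpow_def_of_ne_zero (mul_ne_zero ha htne),
    cpow_def_of_ne_zero ha, cpow_def_of_ne_zero htne,
    Complex.log_mul_ofReal t ht a ha, ← Complex.ofReal_log ht.le, ← Complex.exp_add]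
  congr 1
  ring

lemma keyEq (c : ℂ) {d : ℝ} (hd : 0 < d) {x : ℝ} (hx : 0 < x) :
    (|d| * x ^ (d-1)) • ((1/d : ℝ) • ((((x ^ d : ℝ) : ℂ)) ^ ((((1/d : ℝ)) : ℂ) - 1)
        * Complex.exp (-(c * ((x ^ d : ℝ) : ℂ)))))
      = Complex.exp (-(c * ((x ^ d : ℝ) : ℂ))) := by
  have h1 : (((x ^ d : ℝ) : ℂ)) ^ ((((1/d : ℝ)) : ℂ) - 1) = ((x ^ (1 - d) : ℝ) : ℂ) := by
    rw [show (((1/d : ℝ)) : ℂ) - 1 = (((1/d - 1 : ℝ)) : ℂ) by push_cast; ring,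
      ← Complex.ofReal_cpow (by positivity), ← Real.rpow_mul hx.le]
    norm_cast
    congr 1
    field_simp
  rw [h1, abs_of_pos hd, smul_smul]
  have h2 : d * x ^ (d-1) * (1/d) = x ^ (d-1) := by field_simp
  rw [h2, Complex.real_smul, ← mul_assoc, ← Complex.ofReal_mul, ← Real.rpow_add hx,
    show d - 1 + (1 - d) = 0 by ring, Real.rpow_zero, Complex.ofReal_one, one_mul]

lemma lem2 {c : ℂ} {d : ℝ} (hc : 0 < c.re) (hd : 0 < d) :
    ∫ x in Ioi (0:ℝ), Complex.exp (-(c * ((x ^ d : ℝ) : ℂ))) =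
      (1/(d:ℂ)) * (Complex.Gamma (((1/d : ℝ) : ℂ)) * c ^ (-(((1/d : ℝ) : ℂ)))) := by
  set g : ℝ → ℂ := fun t => (1/d : ℝ) • ((t : ℂ) ^ ((((1/d : ℝ)) : ℂ) - 1)
    * Complex.exp (-(c * t))) with hg
  have h := MeasureTheory.integral_comp_rpow_Ioi g (p := d) hd.ne'
  have h2 : ∫ x in Ioi (0:ℝ), Complex.exp (-(c * ((x ^ d : ℝ) : ℂ)))
      = ∫ x in Ioi (0:ℝ), (|d| * x ^ (d-1)) • g (x ^ d) := by
    refine (setIntegral_congr_fun measurableSet_Ioi (fun x hx => ?_)).symm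
    exact keyEq c hd hx
  rw [h2, h, hg]
  rw [integral_smul]
  rw [lem1 (by simp [one_div]; positivity) hc]
  rw [Complex.real_smul]
  push_cast
  ring

lemma intg2 {c : ℂ} {d : ℝ} (hc : 0 < c.re) (hd : 0 < d) :
    IntegrableOn (fun x : ℝ => Complex.exp (-(c * ((x ^ d : ℝ) : ℂ)))) (Ioi 0) := by
  set g : ℝ → ℂ := fun t => (1/d : ℝ) • ((t : ℂ) ^ ((((1/d : ℝ)) : ℂ) - 1)
    * Complex.exp (-(c * t))) with hg
  have hgint : IntegrableOn g (Ioi 0) :=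
    (intgOn (by simp [one_div]; positivity) hc).smul (1/d : ℝ)
  have := (integrableOn_Ioi_comp_rpow_iff g hd.ne').2 hgint
  refine this.congr_fun (fun x hx => ?_) measurableSet_Ioi
  exact keyEq c hd hx

/-- `∫₀^∞ (b + a·x^d)^{−s} dx = (1/(d·a^{1/d}·b^{s−1/d})) · Γ(s−1/d)·Γ(1/d)/Γ(s)`
for real `d > 0` and `a, b, s ∈ ℂ` with `Re a > 0`, `Re b > 0`, `Re s > 1/d`. -/
theorem stmt1 (d : ℝ) (hd : 0 < d) (a b s : ℂ) (ha : 0 < a.re) (hb : 0 < b.re)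
    (hs : 1 / d < s.re) :
    ∫ x in Set.Ioi (0 : ℝ), (b + a * ((x ^ d : ℝ) : ℂ)) ^ (-s) =
      (1 / ((d : ℂ) * a ^ (1 / (d : ℂ)) * b ^ (s - 1 / (d : ℂ)))) *
        (Complex.Gamma (s - 1 / (d : ℂ)) * Complex.Gamma (1 / (d : ℂ)) / Complex.Gamma s) := by
  have hd' : (0:ℝ) < 1/d := by positivity
  have hsre : 0 < s.re := lt_trans hd' hs
  set z₁ : ℂ := ((1/d : ℝ) : ℂ) with hz₁
  have hcast : (1/(d:ℂ)) = z₁ := by rw [hz₁]; push_cast; ring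
  have hz₁re : z₁.re = 1/d := by rw [hz₁]; simp
  have hGs : Complex.Gamma s ≠ 0 := Complex.Gamma_ne_zero_of_re_pos hsre
  have hane : a ≠ 0 := by intro h; rw [h] at ha; simp at ha
  have hbne : b ≠ 0 := by intro h; rw [h] at hb; simp at hb
  set f : ℝ → ℝ → ℂ := fun x t => (t:ℂ) ^ (s-1) * Complex.exp (-(b*t))
    * Complex.exp (-((a*t) * ((x ^ d : ℝ) : ℂ))) with hf
  -- Fubini integrability
  have hcont : ContinuousOn (Function.uncurry f) (Ioi (0:ℝ) ×ˢ Ioi (0:ℝ)) := by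
    apply continuousOn_of_forall_continuousAt
    rintro ⟨x, t⟩ h
    rw [Set.mem_prod] at h
    have hx : (0:ℝ) < x := h.1
    have ht : (0:ℝ) < t := h.2
    have c1 : ContinuousAt (fun p : ℝ × ℝ => ((p.2 : ℝ) : ℂ) ^ (s - 1)) (x, t) :=
      ContinuousAt.comp (g := fun z : ℂ => z ^ (s-1)) (f := fun p : ℝ × ℝ => ((p.2 : ℝ) : ℂ))
        (continuousAt_cpow_const (Complex.ofReal_mem_slitPlane.2 ht))
        ((Complex.continuous_ofReal.comp continuous_snd).continuousAt)
    have c2 : ContinuousAt (fun p : ℝ × ℝ => Complex.exp (-(b * p.2))) (x, t) :=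
      (Complex.continuous_exp.comp
        ((continuous_const.mul (Complex.continuous_ofReal.comp continuous_snd)).neg)).continuousAt
    have c3 : ContinuousAt (fun p : ℝ × ℝ => ((p.1 ^ d : ℝ) : ℂ)) (x, t) :=
      Complex.continuous_ofReal.continuousAt.comp
        (ContinuousAt.comp (g := fun y : ℝ => y ^ d) (f := Prod.fst) (x := (x, t))
          (Real.continuousAt_rpow_const x d (Or.inl hx.ne')) continuousAt_fst)
    have c4 : ContinuousAt (fun p : ℝ × ℝ =>
        Complex.exp (-((a * p.2) * ((p.1 ^ d : ℝ) : ℂ)))) (x, t) :=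
      Complex.continuous_exp.continuousAt.comp (ContinuousAt.neg (ContinuousAt.mul
        (ContinuousAt.mul continuousAt_const
          (Complex.continuous_ofReal.continuousAt.comp continuousAt_snd)) c3))
    exact (c1.mul c2).mul c4
  have hmeas : AEStronglyMeasurable (Function.uncurry f)
      ((volume.restrict (Ioi 0)).prod (volume.restrict (Ioi 0))) := by
    rw [Measure.prod_restrict]
    exact hcont.aestronglyMeasurable (measurableSet_Ioi.prod measurableSet_Ioi)
  have hsect : ∀ t : ℝ, 0 < t → IntegrableOn (fun x => f x t) (Ioi 0) := by
    intro t ht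
    have hct : 0 < (a * (t:ℂ)).re := by
      simp only [Complex.mul_re, Complex.ofReal_re, Complex.ofReal_im, mul_zero, sub_zero]
      exact mul_pos ha ht
    exact (intg2 hct hd).const_mul _
  have hnormint : ∀ t : ℝ, 0 < t → ∫ x in Ioi (0:ℝ), ‖f x t‖ =
      (Real.Gamma (1/d+1) * a.re ^ (-1/d)) *
        (t ^ ((s.re - 1/d) - 1) * Real.exp (-(b.re * t))) := by
    intro t ht
    have h1 : ∀ x ∈ Ioi (0:ℝ), ‖f x t‖ =
        (t ^ (s.re - 1) * Real.exp (-(b.re * t))) * Real.exp (-(a.re * t) * x ^ d) := by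
      intro x hx
      rw [hf]
      simp only [norm_mul]
      rw [show ‖(t:ℂ) ^ (s-1)‖ * ‖Complex.exp (-(b*t))‖ = ‖(t:ℂ) ^ (s-1) * Complex.exp (-(b*t))‖
        from (norm_mul _ _).symm, normEq ht]
      congr 1
      rw [Complex.norm_exp]
      congr 1
      simp only [Complex.neg_re, Complex.mul_re, Complex.mul_im, Complex.ofReal_re,
        Complex.ofReal_im, mul_zero, sub_zero, zero_mul, add_zero]
      ring
    rw [setIntegral_congr_fun measurableSet_Ioi h1, MeasureTheory.integral_const_mul,
      integral_exp_neg_mul_rpow hd (mul_pos ha ht)]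
    rw [Real.mul_rpow ha.le ht.le,
      show s.re - 1/d - 1 = (s.re - 1) + (-1/d) by ring, Real.rpow_add ht]
    ring
  have hswapInt : Integrable (Function.uncurry f)
      ((volume.restrict (Ioi 0)).prod (volume.restrict (Ioi 0))) := by
    rw [MeasureTheory.integrable_prod_iff' hmeas]
    constructor
    · rw [ae_restrict_iff' measurableSet_Ioi]
      exact ae_of_all _ fun t ht => hsect t ht
    · have hGint : IntegrableOn (fun t : ℝ =>
          (Real.Gamma (1/d+1) * a.re ^ (-1/d)) *
            (t ^ ((s.re - 1/d) - 1) * Real.exp (-(b.re * t)))) (Ioi 0) :=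
        (intgOnR hb (by linarith)).const_mul _
      refine hGint.congr_fun (fun t ht => ?_) measurableSet_Ioi
      exact (hnormint t ht).symm
  -- step A: pointwise Gamma representation
  have stepA : ∀ x ∈ Ioi (0:ℝ), (b + a * ((x ^ d : ℝ) : ℂ)) ^ (-s)
      = (Complex.Gamma s)⁻¹ * ∫ t in Ioi (0:ℝ), f x t := by
    intro x hx
    have hxd : (0:ℝ) < x ^ d := Real.rpow_pos_of_pos hx d
    have hwre : 0 < (b + a * ((x ^ d : ℝ) : ℂ)).re := by
      simp only [Complex.add_re, Complex.mul_re, Complex.ofReal_re, Complex.ofReal_im,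
        mul_zero, sub_zero]
      nlinarith
    have h2 : ∀ t ∈ Ioi (0:ℝ),
        (t:ℂ) ^ (s-1) * Complex.exp (-((b + a * ((x ^ d : ℝ) : ℂ)) * t)) = f x t := by
      intro t ht
      show _ = (t:ℂ) ^ (s-1) * Complex.exp (-(b*t)) * Complex.exp (-((a*t) * ((x ^ d : ℝ) : ℂ)))
      rw [mul_assoc, ← Complex.exp_add]
      congr 2
      ring
    rw [← setIntegral_congr_fun measurableSet_Ioi h2, lem1 hsre hwre, ← mul_assoc,
      inv_mul_cancel₀ hGs, one_mul]
  -- inner integral computation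
  have hInner : ∀ t ∈ Ioi (0:ℝ), ∫ x in Ioi (0:ℝ), f x t =
      ((1/(d:ℂ)) * Complex.Gamma z₁ * a ^ (-z₁)) *
        ((t:ℂ) ^ ((s - z₁) - 1) * Complex.exp (-(b*t))) := by
    intro t ht
    have hct : 0 < (a * (t:ℂ)).re := by
      simp only [Complex.mul_re, Complex.ofReal_re, Complex.ofReal_im, mul_zero, sub_zero]
      exact mul_pos ha ht
    have htne : ((t:ℂ)) ≠ 0 := Complex.ofReal_ne_zero.2 (ne_of_gt ht)
    simp only [hf]
    rw [MeasureTheory.integral_const_mul, lem2 hct hd, mulCpow hane ht (-z₁),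
      show (s - z₁) - 1 = (s - 1) + (-z₁) by ring, Complex.cpow_add _ _ htne]
    ring
  -- assemble
  rw [setIntegral_congr_fun measurableSet_Ioi stepA, MeasureTheory.integral_const_mul,
    MeasureTheory.integral_integral_swap hswapInt,
    setIntegral_congr_fun measurableSet_Ioi hInner, MeasureTheory.integral_const_mul,
    lem1 (by rw [Complex.sub_re, hz₁re]; linarith) hb]
  rw [hcast, Complex.cpow_neg, Complex.cpow_neg]
  have h₁ : a ^ z₁ ≠ 0 := by
    simp only [ne_eq, Complex.cpow_eq_zero_iff, not_and_or, not_not]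
    exact Or.inl hane
  have h₂ : b ^ (s - z₁) ≠ 0 := by
    simp only [ne_eq, Complex.cpow_eq_zero_iff, not_and_or, not_not]
    exact Or.inl hbne
  have h₃ : (d:ℂ) ≠ 0 := Complex.ofReal_ne_zero.2 hd.ne'
  have hzd : z₁ * (d:ℂ) = 1 := by
    rw [hz₁]; push_cast
    field_simp
  field_simp
  ring_nf
  linear_combination (Complex.Gamma z₁ * Complex.Gamma (-z₁ + s)) * hzd
end

section
/- Let d ∈ ℕ, s ∈ ℂ, and a, b ∈ ℂ with Re a > 0 and Re b > 0; set δ = (Re b / Re a)^{1/d} and define f : (−δ, ∞) → ℂ by f(x) = (b + a·x^d)^{−s}. Then for every k ∈ ℕ₀: if d divides k then f^{(k)}(0) = k! · binom(−s, k/d) · a^{k/d} · b^{−s−k/d}, and if d does not divide k then f^{(k)}(0) = 0. -/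
open Finset

/-- Generalized binomial coefficient `binom(z,ℓ) = z(z−1)⋯(z−ℓ+1)/ℓ!`. -/
noncomputable def cbinom (z : ℂ) (l : ℕ) : ℂ :=
  (∏ i ∈ Finset.range l, (z - (i : ℂ))) / (Nat.factorial l : ℂ)

private lemma aux_isOpen (a b : ℂ) : IsOpen {w : ℂ | 0 < (b + a * w).re} := by
  have : Continuous fun w : ℂ => (b + a * w).re := by fun_prop
  exact isOpen_lt continuous_const this

private lemma aux_closed_form (s a b : ℂ) (n : ℕ) :
    Set.EqOn (iteratedDerivWithin n (fun w : ℂ => (b + a * w) ^ (-s)) {w : ℂ | 0 < (b + a * w).re})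
      (fun w => (∏ i ∈ range n, (-s - (i : ℂ))) * a ^ n * (b + a * w) ^ (-s - (n : ℂ)))
      {w : ℂ | 0 < (b + a * w).re} := by
  set U : Set ℂ := {w : ℂ | 0 < (b + a * w).re} with hUdef
  have hU : IsOpen U := aux_isOpen a b
  induction n with
  | zero =>
    intro w hw
    simp [iteratedDerivWithin_zero]
  | succ n ih =>
    intro w hw
    have hd : HasDerivAt (fun w : ℂ => b + a * w) a w := by
      simpa using ((hasDerivAt_id w).const_mul a).const_add b
    have h0 : (b + a * w) ∈ Complex.slitPlane := Or.inl hw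
    have hder : HasDerivAt
        (fun w => (∏ i ∈ range n, (-s - (i : ℂ))) * a ^ n * (b + a * w) ^ (-s - (n : ℂ)))
        ((∏ i ∈ range n, (-s - (i : ℂ))) * a ^ n *
          ((-s - (n : ℂ)) * (b + a * w) ^ (-s - (n : ℂ) - 1) * a)) w :=
      (hd.cpow_const h0).const_mul _
    rw [iteratedDerivWithin_succ,
      derivWithin_congr ih (ih hw), derivWithin_of_isOpen hU hw, hder.deriv,
      prod_range_succ]
    have he : -s - (n : ℂ) - 1 = -s - ((n + 1 : ℕ) : ℂ) := by push_cast; ring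
    rw [he]
    ring

/-- The complex function `g(w) = (b+aw)^{-s}` has a power series at `0` whose coefficients are
the binomial ones. -/
private lemma aux_complex (s a b : ℂ) (hb : 0 < b.re) :
    ∃ p : FormalMultilinearSeries ℂ ℂ ℂ, HasFPowerSeriesAt (fun w : ℂ => (b + a * w) ^ (-s)) p 0 ∧
      ∀ n, p.coeff n = cbinom (-s) n * a ^ n * b ^ (-s - (n : ℂ)) := by
  set U : Set ℂ := {w : ℂ | 0 < (b + a * w).re} with hUdef
  have hU : IsOpen U := aux_isOpen a b
  have h0U : (0 : ℂ) ∈ U := by simp [hUdef, hb]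
  set g : ℂ → ℂ := fun w : ℂ => (b + a * w) ^ (-s) with hgdef
  have hdiff : DifferentiableOn ℂ g U := by
    intro w hw
    have hd : HasDerivAt (fun w : ℂ => b + a * w) a w := by
      simpa using ((hasDerivAt_id w).const_mul a).const_add b
    exact (hd.cpow_const (Or.inl hw)).differentiableAt.differentiableWithinAt
  obtain ⟨p, hp⟩ := hdiff.analyticAt (hU.mem_nhds h0U)
  refine ⟨p, hp, fun n => ?_⟩
  obtain ⟨r, hpr⟩ := hp
  have h1 : (Nat.factorial n : ℂ) * p.coeff n = iteratedDeriv n g 0 := by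
    have := hpr.factorial_smul (1 : ℂ) n
    rw [FormalMultilinearSeries.apply_eq_pow_smul_coeff, one_pow, one_smul,
      nsmul_eq_mul] at this
    rw [this, iteratedDeriv_eq_iteratedFDeriv]
  have h2 : iteratedDeriv n g 0 = (∏ i ∈ range n, (-s - (i : ℂ))) * a ^ n * b ^ (-s - (n : ℂ)) := by
    have hw := aux_closed_form s a b n h0U
    rw [iteratedDerivWithin_eq_iteratedFDerivWithin, iteratedFDerivWithin_of_isOpen n hU h0U,
      ← iteratedDeriv_eq_iteratedFDeriv] at hw
    rw [hw]
    simp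
  have hfac : (Nat.factorial n : ℂ) ≠ 0 := Nat.cast_ne_zero.mpr n.factorial_ne_zero
  field_simp [cbinom]
  rw [show p.coeff n = iteratedDeriv n g 0 / (Nat.factorial n : ℂ) from
    eq_div_of_mul_eq hfac (by rw [mul_comm]; exact h1), h2, cbinom]
  ring

/-- For `f(x) = (b + a·x^d)^{−s}` on `(−δ, ∞)` with `δ = (Re b/Re a)^{1/d}`:
`f^{(k)}(0) = k!·binom(−s,k/d)·a^{k/d}·b^{−s−k/d}` if `d ∣ k`, and `f^{(k)}(0) = 0`
otherwise. -/
theorem stmt4 (d : ℕ) (hd : 0 < d) (s a b : ℂ) (ha : 0 < a.re) (hb : 0 < b.re) (k : ℕ) :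
    (d ∣ k →
      iteratedDerivWithin k (fun x : ℝ => (b + a * (x : ℂ) ^ d) ^ (-s))
          (Set.Ioi (-((b.re / a.re) ^ (1 / (d : ℝ))))) 0 =
        (Nat.factorial k : ℂ) * cbinom (-s) (k / d) * a ^ (k / d) *
          b ^ (-s - ((k / d : ℕ) : ℂ))) ∧
    (¬ d ∣ k →
      iteratedDerivWithin k (fun x : ℝ => (b + a * (x : ℂ) ^ d) ^ (-s))
          (Set.Ioi (-((b.re / a.re) ^ (1 / (d : ℝ))))) 0 = 0) := by
  obtain ⟨p, hp, hcoeff⟩ := aux_complex s a b hb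
  obtain ⟨r, hpr⟩ := hp
  set f : ℝ → ℂ := fun x : ℝ => (b + a * (x : ℂ) ^ d) ^ (-s) with hfdef
  set e : ℕ → ℂ := fun m => if d ∣ m then p.coeff (m / d) else 0 with hedef
  set q : FormalMultilinearSeries ℝ ℝ ℂ :=
    fun n => ContinuousMultilinearMap.mkPiRing ℝ (Fin n) (e n) with hqdef
  have hqapp : ∀ (n : ℕ) (y : ℝ), (q n fun _ => y) = (y : ℂ) ^ n * e n := by
    intro n y
    simp [hqdef, ContinuousMultilinearMap.mkPiRing_apply, prod_const, Complex.real_smul]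
  have hqnorm : ∀ n : ℕ, ‖q n‖ = ‖e n‖ := by
    intro n
    simp [hqdef, ContinuousMultilinearMap.norm_mkPiRing]
  have hinj : Function.Injective fun n : ℕ => d * n := fun m n h => by
    exact Nat.eq_of_mul_eq_mul_left hd h
  have hrange : ∀ m : ℕ, m ∉ Set.range (fun n : ℕ => d * n) → ¬ d ∣ m := by
    intro m hm hdvd
    obtain ⟨c, hc⟩ := hdvd
    exact hm ⟨c, hc.symm⟩
  set ρ : ENNReal := min r 1 with hρdef
  have hρpos : 0 < ρ := lt_min hpr.r_pos zero_lt_one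
  -- the power series for `f` at `0`
  have hq : HasFPowerSeriesOnBall f q 0 ρ := by
    constructor
    · -- ρ ≤ q.radius
      apply ENNReal.le_of_forall_nnreal_lt
      intro t ht
      have ht1 : (t : ℝ) ≤ 1 := by
        have := ht.trans_le (min_le_right r 1)
        exact_mod_cast this.le
      have htr : (t : ENNReal) < p.radius :=
        (ht.trans_le (min_le_left r 1)).trans_le hpr.r_le
      have hs1 : Summable fun n => ‖p n‖ * (t : ℝ) ^ n := p.summable_norm_mul_pow htr
      apply q.le_radius_of_summable
      have hs2 : Summable ((fun m => ‖q m‖ * (t : ℝ) ^ m) ∘ fun n => d * n) := by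
        apply Summable.of_nonneg_of_le (fun n => by simp only [Function.comp_apply]; positivity) _ hs1
        intro n
        have h1 : ‖q (d * n)‖ = ‖p.coeff n‖ := by
          rw [hqnorm, hedef]
          simp [Nat.dvd_mul_right, Nat.mul_div_cancel_left n hd]
        have h2 : (t : ℝ) ^ (d * n) ≤ (t : ℝ) ^ n :=
          pow_le_pow_of_le_one t.coe_nonneg ht1 (Nat.le_mul_of_pos_left n hd)
        calc ‖q (d * n)‖ * (t : ℝ) ^ (d * n) = ‖p.coeff n‖ * (t : ℝ) ^ (d * n) := by rw [h1]
          _ ≤ ‖p.coeff n‖ * (t : ℝ) ^ n := by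
              exact mul_le_mul_of_nonneg_left h2 (norm_nonneg _)
          _ ≤ ‖p n‖ * (t : ℝ) ^ n := by
              rw [p.norm_apply_eq_norm_coef]
      refine (hinj.summable_iff ?_).mp hs2
      intro m hm
      have : e m = 0 := by simp [hedef, hrange m hm]
      rw [hqnorm, this, norm_zero, zero_mul]
    · exact hρpos
    · intro y hy
      rw [EMetric.mem_ball, edist_zero_right] at hy
      have hy1 : ‖y‖₊ < 1 := by
        have := hy.trans_le (min_le_right r 1)
        rw [← ENNReal.coe_lt_one_iff, ← enorm_eq_nnnorm]; exact this
      have hzr : (‖(y : ℂ) ^ d‖₊ : ENNReal) < r := by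
        have h1 : ‖(y : ℂ) ^ d‖₊ = ‖y‖₊ ^ d := by
          rw [nnnorm_pow, Complex.nnnorm_real]
        have h2 : ‖y‖₊ ^ d ≤ ‖y‖₊ := pow_le_of_le_one (by positivity) hy1.le hd.ne'
        calc (‖(y : ℂ) ^ d‖₊ : ENNReal) = (‖y‖₊ ^ d : NNReal) := by rw [h1]
          _ ≤ (‖y‖₊ : ENNReal) := by exact_mod_cast h2
          _ < r := hy.trans_le (min_le_left r 1)
      have hsum := hpr.hasSum (y := (y : ℂ) ^ d) (by
        rw [EMetric.mem_ball, edist_zero_right]; exact hzr)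
      rw [zero_add] at hsum
      have heq : ((fun m => q m fun _ => y) ∘ fun n => d * n) =
          fun n => p n fun _ => (y : ℂ) ^ d := by
        funext n
        rw [Function.comp_apply, hqapp, FormalMultilinearSeries.apply_eq_pow_smul_coeff,
          smul_eq_mul, hedef]
        simp only [Nat.dvd_mul_right, if_true, Nat.mul_div_cancel_left n hd]
        rw [← pow_mul]
      have := (hinj.hasSum_iff (f := fun m => q m fun _ : Fin m => y)
        (a := (fun w : ℂ => (b + a * w) ^ (-s)) ((y : ℂ) ^ d)) ?_).mp ?_
      · rw [zero_add]
        exact this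
      · intro m hm
        show (q m fun _ : Fin m => y) = 0
        rw [hqapp]
        simp [hedef, hrange m hm]
      · rw [heq]
        exact hsum
  -- iterated derivative of f at 0
  have hiter : ∀ m : ℕ, iteratedDeriv m f 0 = (Nat.factorial m : ℂ) * e m := by
    intro m
    have := hq.factorial_smul (1 : ℝ) m
    rw [hqapp, Complex.ofReal_one, one_pow, one_mul, nsmul_eq_mul] at this
    rw [iteratedDeriv_eq_iteratedFDeriv, ← this]
  -- within = global
  have hδ : (0 : ℝ) < (b.re / a.re) ^ (1 / (d : ℝ)) :=
    Real.rpow_pos_of_pos (div_pos hb ha) _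
  have h0mem : (0 : ℝ) ∈ Set.Ioi (-((b.re / a.re) ^ (1 / (d : ℝ)))) := by
    simpa using hδ
  have hwithin : iteratedDerivWithin k f (Set.Ioi (-((b.re / a.re) ^ (1 / (d : ℝ))))) 0 =
      iteratedDeriv k f 0 := by
    rw [iteratedDerivWithin_eq_iteratedFDerivWithin,
      iteratedFDerivWithin_of_isOpen k isOpen_Ioi h0mem, ← iteratedDeriv_eq_iteratedFDeriv]
  constructor
  · intro hdvd
    rw [hwithin, hiter k]
    rw [hedef]
    simp only [hdvd, if_true]
    rw [hcoeff (k / d)]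
    ring
  · intro hndvd
    rw [hwithin, hiter k]
    simp [hedef, hndvd]
end

section
/- Let n ∈ ℕ and let c, e : ℕ₀^n → ℂ be finitely supported functions such that ∑_{k ∈ ℕ₀^n} c(k) · ∏_{i=1}^n a_i^{k_i} = ∑_{α ∈ ℕ₀^n} e(α) · ∏_{i=1}^n (1 + a_i)^{α_i} for all a = (a₁,…,a_n) ∈ ℝ^n. Then ∑_{k ∈ ℕ₀^n} c(k) · ∏_{i=1}^n B_{k_i} = ∑_{α ∈ ℕ₀^n} e(α) · ∏_{i=1}^n B̃_{α_i}. -/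
open Finset

noncomputable def Btil (k : ℕ) : ℚ := (-1) ^ k * bernoulli k

lemma Btil_eq_bernoulli' (k : ℕ) : Btil k = bernoulli' k := by
  rw [Btil, bernoulli, ← mul_assoc, ← mul_pow]; norm_num

lemma keyB (m : ℕ) :
    ∑ j ∈ range (m + 1), (m.choose j : ℚ) * bernoulli j = Btil m := by
  rw [Finset.sum_range_succ, sum_bernoulli, Nat.choose_self, Btil_eq_bernoulli']
  rcases eq_or_ne m 1 with rfl | hm
  · norm_num
  · rw [if_neg hm, bernoulli_eq_bernoulli'_of_ne_one hm]; ring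

open MvPolynomial

noncomputable def bw (n : ℕ) (k : Fin n →₀ ℕ) : ℂ := ∏ i, ((bernoulli (k i) : ℚ) : ℂ)

noncomputable def Lb (n : ℕ) : MvPolynomial (Fin n) ℂ →+ ℂ where
  toFun p := Finsupp.sum (AddMonoidAlgebra.coeff p) fun k v => v * bw n k
  map_zero' := Finsupp.sum_zero_index
  map_add' p q := by
    exact Finsupp.sum_add_index' (f := AddMonoidAlgebra.coeff p) (g := AddMonoidAlgebra.coeff q) (h := fun k v => v * bw n k)
      (fun k => zero_mul (bw n k)) (fun k a b => add_mul a b (bw n k))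

lemma Lb_apply (n : ℕ) (p : MvPolynomial (Fin n) ℂ) :
    Lb n p = Finsupp.sum (AddMonoidAlgebra.coeff p) fun k v => v * bw n k := rfl

lemma Lb_monomial (n : ℕ) (k : Fin n →₀ ℕ) (v : ℂ) :
    Lb n (monomial k v) = v * ∏ i, ((bernoulli (k i) : ℚ) : ℂ) := by
  rw [Lb_apply, ← MvPolynomial.single_eq_monomial, AddMonoidAlgebra.coeff_single]
  exact Finsupp.sum_single_index (zero_mul _)

lemma Lb_smul (n : ℕ) (v : ℂ) (p : MvPolynomial (Fin n) ℂ) :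
    Lb n (v • p) = v * Lb n p := by
  rw [Lb_apply, Lb_apply]
  rw [AddMonoidAlgebra.coeff_smul, Finsupp.sum_smul_index (h := fun k v => v * bw n k) (fun k => zero_mul _),
    Finsupp.mul_sum]
  exact Finsupp.sum_congr fun k _ => by ring

lemma prod_X_pow (n : ℕ) (g : Fin n → ℕ) :
    (∏ i, (X i : MvPolynomial (Fin n) ℂ) ^ g i) =
      monomial (Finsupp.equivFunOnFinite.symm g) 1 := by
  rw [← MvPolynomial.prod_X_pow_eq_monomial]
  refine (Finset.prod_subset (Finset.subset_univ _) fun i _ hi => ?_).symm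
  simp only [Finsupp.mem_support_iff, ne_eq, not_not,
    Finsupp.coe_equivFunOnFinite_symm] at hi ⊢
  simp [hi]

lemma Lb_prod (n : ℕ) (m : Fin n → ℕ) :
    Lb n (∏ i, ((1 : MvPolynomial (Fin n) ℂ) + X i) ^ m i) =
      ∏ i, ((Btil (m i) : ℚ) : ℂ) := by
  have h1 : ∀ i, ((1 : MvPolynomial (Fin n) ℂ) + X i) ^ m i =
      ∑ j ∈ range (m i + 1), (X i) ^ j * C (((m i).choose j : ℂ)) := by
    intro i
    rw [add_comm, add_pow]
    refine Finset.sum_congr rfl fun j _ => ?_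
    simp
  have expand : ∏ i, ((1 : MvPolynomial (Fin n) ℂ) + X i) ^ m i =
      ∑ g ∈ Fintype.piFinset (fun i => range (m i + 1)),
        monomial (Finsupp.equivFunOnFinite.symm g) (∏ i, ((m i).choose (g i) : ℂ)) := by
    simp only [h1]
    rw [Finset.prod_univ_sum]
    refine Finset.sum_congr rfl fun g _ => ?_
    have hC : (∏ x, (C (((m x).choose (g x) : ℂ)) : MvPolynomial (Fin n) ℂ)) =
        C (∏ x, (((m x).choose (g x) : ℂ))) :=
      (map_prod (MvPolynomial.C : ℂ →+* MvPolynomial (Fin n) ℂ)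
        (fun x => (((m x).choose (g x) : ℂ))) Finset.univ).symm
    rw [Finset.prod_mul_distrib, prod_X_pow, hC, mul_comm, C_mul_monomial, mul_one]
  rw [expand, map_sum]
  have hterm : ∀ g ∈ Fintype.piFinset (fun i => range (m i + 1)),
      Lb n (monomial (Finsupp.equivFunOnFinite.symm g) (∏ i, ((m i).choose (g i) : ℂ))) =
        ∏ i, (((m i).choose (g i) : ℂ) * ((bernoulli (g i) : ℚ) : ℂ)) := by
    intro g _
    rw [Lb_monomial, ← Finset.prod_mul_distrib]
    simp
  rw [Finset.sum_congr rfl hterm]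
  have hps := Finset.prod_univ_sum (fun i => range (m i + 1))
      (fun i j => (((m i).choose j : ℂ)) * ((bernoulli j : ℚ) : ℂ))
  rw [← hps]
  refine Finset.prod_congr rfl fun i _ => ?_
  rw [← keyB (m i)]
  push_cast
  rfl

lemma vanish_aux {n : ℕ} (p : MvPolynomial (Fin n) ℂ)
    (h : ∀ a : Fin n → ℝ, eval (fun i => (a i : ℂ)) p = 0)
    (f : ℂ →ₗ[ℝ] ℝ) (k : Fin n →₀ ℕ) : f (coeff k p) = 0 := by
  have hzero : (∑ d ∈ p.support, monomial d (f (coeff d p)) : MvPolynomial (Fin n) ℝ) = 0 := by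
    apply MvPolynomial.funext
    intro a
    rw [map_zero]
    have calc1 : eval a (∑ d ∈ p.support, monomial d (f (coeff d p))) =
        ∑ d ∈ p.support, f (coeff d p) * ∏ i, a i ^ d i := by
      rw [map_sum]
      refine Finset.sum_congr rfl fun d _ => ?_
      rw [eval_monomial, Finsupp.prod_pow]
    have calc2 : (0 : ℝ) = ∑ d ∈ p.support, f (coeff d p) * ∏ i, a i ^ d i := by
      have h0 : f (eval (fun i => (a i : ℂ)) p) = 0 := by rw [h a, map_zero]
      rw [MvPolynomial.eval_eq', map_sum] at h0
      rw [← h0]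
      refine Finset.sum_congr rfl fun d _ => ?_
      have hc : (∏ i, ((a i : ℂ)) ^ d i) = ((∏ i, a i ^ d i : ℝ) : ℂ) := by
        push_cast; rfl
      rw [hc, mul_comm, ← Complex.real_smul, map_smul, smul_eq_mul, mul_comm]
    rw [calc1, ← calc2]
  by_cases hk : k ∈ p.support
  · have := congrArg (coeff k) hzero
    rw [MvPolynomial.coeff_sum, coeff_zero] at this
    simpa [MvPolynomial.coeff_monomial, hk] using this
  · rw [MvPolynomial.notMem_support_iff.mp hk, map_zero]

lemma vanish {n : ℕ} (p : MvPolynomial (Fin n) ℂ)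
    (h : ∀ a : Fin n → ℝ, eval (fun i => (a i : ℂ)) p = 0) : p = 0 := by
  ext k
  rw [coeff_zero]
  apply Complex.ext
  · simpa using vanish_aux p h Complex.reLm k
  · simpa using vanish_aux p h Complex.imLm k

/-- If two finitely supported coefficient families `c`, `e` on `ℕ₀^n` represent the
same polynomial function — `∑_k c(k) ∏ a_i^{k_i} = ∑_α e(α) ∏ (1+a_i)^{α_i}` for all
real `a` — then substituting Bernoulli numbers in the monomial basis agrees with
substituting the modified Bernoulli numbers `B̃` in the shifted basis:
`∑_k c(k) ∏ B_{k_i} = ∑_α e(α) ∏ B̃_{α_i}`. -/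
theorem stmt17 (n : ℕ) (c e : ((Fin n → ℕ) →₀ ℂ))
    (h : ∀ a : Fin n → ℝ,
      (c.sum fun k v => v * ∏ i, ((a i : ℂ)) ^ (k i)) =
        (e.sum fun α v => v * ∏ i, ((1 : ℂ) + (a i : ℂ)) ^ (α i))) :
    (c.sum fun k v => v * ∏ i, ((bernoulli (k i) : ℂ))) =
      (e.sum fun α v => v * ∏ i, ((Btil (α i) : ℂ))) := by
  classical
  set P : MvPolynomial (Fin n) ℂ :=
    c.sum fun k v => monomial (Finsupp.equivFunOnFinite.symm k) v with hP
  set Q : MvPolynomial (Fin n) ℂ :=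
    e.sum fun α v => v • ∏ i, ((1 : MvPolynomial (Fin n) ℂ) + X i) ^ α i with hQ
  have hPQ : P = Q := by
    rw [← sub_eq_zero]
    apply vanish
    intro a
    rw [map_sub, sub_eq_zero]
    have hPe : eval (fun i => (a i : ℂ)) P =
        c.sum fun k v => v * ∏ i, ((a i : ℂ)) ^ (k i) := by
      rw [hP, map_finsuppSum]
      refine Finsupp.sum_congr fun k _ => ?_
      rw [eval_monomial, Finsupp.prod_pow]
      simp
    have hQe : eval (fun i => (a i : ℂ)) Q =
        e.sum fun α v => v * ∏ i, ((1 : ℂ) + (a i : ℂ)) ^ (α i) := by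
      rw [hQ, map_finsuppSum]
      refine Finsupp.sum_congr fun α _ => ?_
      rw [smul_eq_C_mul, map_mul, eval_C, map_prod]
      simp
    rw [hPe, hQe, h a]
  have hL := congrArg (Lb n) hPQ
  rw [hP, hQ, map_finsuppSum, map_finsuppSum] at hL
  calc (c.sum fun k v => v * ∏ i, ((bernoulli (k i) : ℂ)))
      = c.sum fun k v => Lb n (monomial (Finsupp.equivFunOnFinite.symm k) v) := by
        refine Finsupp.sum_congr fun k _ => ?_
        rw [Lb_monomial]
        simp
    _ = e.sum fun α v => Lb n (v • ∏ i, ((1 : MvPolynomial (Fin n) ℂ) + X i) ^ α i) := hL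
    _ = e.sum fun α v => v * ∏ i, ((Btil (α i) : ℂ)) := by
        refine Finsupp.sum_congr fun α _ => ?_
        rw [Lb_smul, Lb_prod]
end
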